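/- A position M = (n_0, n_1, n_2, n_3, n_4, n_5) in extended circular nim ECN(6_{1,2}, 2) is a P-position if and only if n_0 ⊕ n_3 = n_1 ⊕ n_4 = n_2 ⊕ n_5, where ⊕ denotes bitwise XOR. -/

import Mathlib

/-- `IsN move x`: `x` is an N-position (next player wins) for the game with
move relation `move` (least fixed point; correct for short games). -/
inductive IsN {α : Type*} (move : α → α → Prop) : α → Prop
  | intro (x y : α) (hxy : move x y) (hy : ∀ z, move y z → IsN move z) : IsN move x

/-- `IsP move x`: `x` is a P-position (previous player wins) under normal play. -/
def IsP {α : Type*} (move : α → α → Prop) (x : α) : Prop :=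
  ∀ y, move x y → IsN move y

/-- Move relation of extended circular nim `ECN(m_S, k)`: reduce some piles,
all lying among `k` piles taken every `s`-th pile (for some `s ∈ S`) starting
at some index `i`, removing at least one token in total. -/
def ecnMove (m : ℕ) (S : Set ℕ) (k : ℕ) (x y : Fin m → ℕ) : Prop :=
  y ≠ x ∧ (∀ j, y j ≤ x j) ∧
    ∃ s ∈ S, ∃ i : ℕ, ∀ j : Fin m, y j ≠ x j → ∃ t < k, (j : ℕ) = (i + t * s) % m

/-- `cyc m Q n` : some cyclic rotation of `n`, or of its reversal, satisfies `Q`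
(the relation `M ∈_↻ P`). -/
def cyc (m : ℕ) (Q : (Fin m → ℕ) → Prop) (n : Fin m → ℕ) : Prop :=
  ∃ r : ℕ,
    Q (fun j => n ⟨(j.1 + r) % m, Nat.mod_lt _ (Nat.lt_of_le_of_lt (Nat.zero_le _) j.isLt)⟩) ∨
    Q (fun j => n ⟨(r + (m - j.1)) % m, Nat.mod_lt _ (Nat.lt_of_le_of_lt (Nat.zero_le _) j.isLt)⟩)

def Cond6 (x : Fin 6 → ℕ) : Prop :=
  x 0 ^^^ x 3 = x 1 ^^^ x 4 ∧ x 1 ^^^ x 4 = x 2 ^^^ x 5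

def ptn (j : Fin 6) : Fin 6 := ⟨(j.val + 3) % 6, by omega⟩

lemma cond_pxor {z : Fin 6 → ℕ} (hz : Cond6 z) (j : Fin 6) :
    z j ^^^ z (ptn j) = z 0 ^^^ z 3 := by
  obtain ⟨h1, h2⟩ := hz
  fin_cases j <;>
    simp only [ptn, Fin.isValue] <;> norm_num <;>
    first
      | rfl
      | exact h1.symm
      | exact (h1.trans h2).symm
      | (rw [Nat.xor_comm]
         first
           | rfl
           | exact h1.symm
           | exact (h1.trans h2).symm)

lemma reach6 (u v t : ℕ) (h : t ≤ u ^^^ v) : t ^^^ v ≤ u ∨ t ^^^ u ≤ v := by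
  rcases eq_or_lt_of_le h with h | h
  · left; rw [h, Nat.xor_xor_cancel_right]
  · rcases Nat.lt_xor_cases h with h' | h'
    · exact Or.inl h'.le
    · exact Or.inr h'.le

lemma xor_lcomm (a b c : ℕ) : a ^^^ (b ^^^ c) = b ^^^ (a ^^^ c) := by
  rw [← Nat.xor_assoc, Nat.xor_comm a b, Nat.xor_assoc]

lemma xhelp1 {u v t : ℕ} (h : u ^^^ v ≠ t) : t ^^^ v ≠ u := fun he => h (by
  rw [← he, Nat.xor_xor_cancel_right])

lemma xhelp2 {u v t : ℕ} (h : u ^^^ v ≠ t) : t ^^^ u ≠ v := fun he => h (by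
  rw [← he, Nat.xor_comm t u, ← Nat.xor_assoc, Nat.xor_self, Nat.zero_xor])

lemma legal_nat (pv qv : ℕ) (hp : pv < 6) (hq : qv < 6) (h : pv % 3 ≠ qv % 3) :
    ∃ s i : ℕ, (s = 1 ∨ s = 2) ∧
      ((pv = i % 6 ∧ qv = (i + s) % 6) ∨ (qv = i % 6 ∧ pv = (i + s) % 6)) := by
  have hd : (qv + 6 - pv) % 6 = 1 ∨ (qv + 6 - pv) % 6 = 2 ∨
      (qv + 6 - pv) % 6 = 4 ∨ (qv + 6 - pv) % 6 = 5 := by omega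
  rcases hd with hd | hd | hd | hd
  · exact ⟨1, pv, Or.inl rfl, Or.inl ⟨by omega, by omega⟩⟩
  · exact ⟨2, pv, Or.inr rfl, Or.inl ⟨by omega, by omega⟩⟩
  · exact ⟨2, qv, Or.inr rfl, Or.inr ⟨by omega, by omega⟩⟩
  · exact ⟨1, qv, Or.inl rfl, Or.inr ⟨by omega, by omega⟩⟩

lemma mk_move (x : Fin 6 → ℕ) (p q : Fin 6) (hres : p.val % 3 ≠ q.val % 3)
    (vp vq : ℕ) (h1 : vp ≤ x p) (h2 : vq ≤ x q) (hne : vp ≠ x p ∨ vq ≠ x q) :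
    ecnMove 6 {1, 2} 2 x (Function.update (Function.update x p vp) q vq) := by
  have hpq : p ≠ q := fun h => hres (by rw [h])
  set y := Function.update (Function.update x p vp) q vq with hy
  have hyq : y q = vq := Function.update_self _ _ _
  have hyp : y p = vp := by
    rw [hy, Function.update_of_ne hpq, Function.update_self]
  have hyj : ∀ j, j ≠ p → j ≠ q → y j = x j := by
    intro j hjp hjq
    rw [hy, Function.update_of_ne hjq, Function.update_of_ne hjp]
  refine ⟨?_, ?_, ?_⟩
  · intro h
    rcases hne with hne | hne
    · exact hne (by rw [← hyp, h])
    · exact hne (by rw [← hyq, h])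
  · intro j
    by_cases hjp : j = p
    · subst hjp; rw [hyp]; exact h1
    · by_cases hjq : j = q
      · subst hjq; rw [hyq]; exact h2
      · rw [hyj j hjp hjq]
  · obtain ⟨s, i, hs, hcase⟩ := legal_nat p.val q.val p.isLt q.isLt hres
    refine ⟨s, by rcases hs with h | h <;> simp [h], i, ?_⟩
    intro j hj
    have hjpq : j = p ∨ j = q := by
      by_contra hc
      push_neg at hc
      exact hj (hyj j hc.1 hc.2)
    rcases hcase with ⟨hcp, hcq⟩ | ⟨hcq, hcp⟩ <;> rcases hjpq with rfl | rfl
    · exact ⟨0, by omega, by simpa using hcp⟩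
    · exact ⟨1, by omega, by simpa using hcq⟩
    · exact ⟨1, by omega, by simpa using hcp⟩
    · exact ⟨0, by omega, by simpa using hcq⟩

lemma lemA {x y : Fin 6 → ℕ} (hx : Cond6 x) (h : ecnMove 6 {1, 2} 2 x y) :
    ¬Cond6 y := by
  obtain ⟨hne, hle, s, hs, i, hch⟩ := h
  have hs12 : s = 1 ∨ s = 2 := by simpa using hs
  set p : Fin 6 := ⟨i % 6, by omega⟩ with hp
  set q : Fin 6 := ⟨(i + s) % 6, by omega⟩ with hq
  have hchg : ∀ j : Fin 6, y j ≠ x j → j = p ∨ j = q := by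
    intro j hj
    obtain ⟨t, ht, hjt⟩ := hch j hj
    interval_cases t
    · left; exact Fin.ext (by simpa using hjt)
    · right; exact Fin.ext (by simpa using hjt)
  have hres : p.val % 3 ≠ q.val % 3 := by
    simp only [hp, hq]
    omega
  obtain ⟨k, hk⟩ := Function.ne_iff.mp hne
  have hkpq := hchg k hk
  -- the partner of k is unchanged
  have hk3 : y (ptn k) = x (ptn k) := by
    by_contra hc
    have := hchg _ hc
    have h1 : (ptn k).val = (k.val + 3) % 6 := rfl
    rcases hkpq with rfl | rfl <;> rcases this with h2 | h2 <;>
      rw [Fin.ext_iff] at h2 <;> omega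
  -- the untouched pair
  set u : Fin 6 := ⟨3 - p.val % 3 - q.val % 3, by omega⟩ with hu
  have huv : u.val = 3 - p.val % 3 - q.val % 3 := rfl
  have hures : u.val % 3 ≠ p.val % 3 ∧ u.val % 3 ≠ q.val % 3 := by
    constructor <;> omega
  have hu1 : y u = x u := by
    by_contra hc
    rcases hchg _ hc with h2 | h2 <;> rw [Fin.ext_iff] at h2 <;> omega
  have hu2 : y (ptn u) = x (ptn u) := by
    by_contra hc
    have h1 : (ptn u).val = (u.val + 3) % 6 := rfl
    rcases hchg _ hc with h2 | h2 <;> rw [Fin.ext_iff] at h2 <;> omega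
  intro hy
  have e1 : y k ^^^ y (ptn k) = y u ^^^ y (ptn u) :=
    (cond_pxor hy k).trans (cond_pxor hy u).symm
  have e2 : x u ^^^ x (ptn u) = x k ^^^ x (ptn k) :=
    (cond_pxor hx u).trans (cond_pxor hx k).symm
  rw [hk3, hu1, hu2, e2] at e1
  exact hk (by simpa using e1)

lemma lemB {x : Fin 6 → ℕ} (hx : ¬Cond6 x) :
    ∃ y, ecnMove 6 {1, 2} 2 x y ∧ Cond6 y := by
  rcases le_total (x 0 ^^^ x 3) (x 1 ^^^ x 4) with hab | hab
  · rcases le_total (x 0 ^^^ x 3) (x 2 ^^^ x 5) with hac | hac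
    · -- v = a, change pairs (1,4),(2,5)
      have hv1 : x 0 ^^^ x 3 ≤ x 1 ^^^ x 4 := hab
      have hv2 : x 0 ^^^ x 3 ≤ x 2 ^^^ x 5 := hac
      have hne0 : x 1 ^^^ x 4 ≠ x 0 ^^^ x 3 ∨ x 2 ^^^ x 5 ≠ x 0 ^^^ x 3 := by
        by_contra hc
        push_neg at hc
        exact hx ⟨hc.1.symm, hc.1.trans hc.2.symm⟩
      rcases reach6 (x 1) (x 4) (x 0 ^^^ x 3) hv1 with h1 | h1
      · rcases reach6 (x 2) (x 5) (x 0 ^^^ x 3) hv2 with h2 | h2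
        · refine ⟨_, mk_move x 1 2 (by decide) (x 0 ^^^ x 3 ^^^ x 4) (x 0 ^^^ x 3 ^^^ x 5) h1 h2 ?_, ?_⟩
          · exact hne0.imp (fun h => xhelp1 h) (fun h => xhelp1 h)
          · simp [Cond6, Function.update_apply, Nat.xor_xor_cancel_right, Nat.xor_xor_cancel_left,
              Nat.xor_comm, Nat.xor_assoc, xor_lcomm, Nat.xor_self, Nat.xor_zero]
        · refine ⟨_, mk_move x 1 5 (by decide) (x 0 ^^^ x 3 ^^^ x 4) (x 0 ^^^ x 3 ^^^ x 2) h1 h2 ?_, ?_⟩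
          · exact hne0.imp (fun h => xhelp1 h) (fun h => xhelp2 h)
          · simp [Cond6, Function.update_apply, Nat.xor_xor_cancel_right, Nat.xor_xor_cancel_left,
              Nat.xor_comm, Nat.xor_assoc, xor_lcomm, Nat.xor_self, Nat.xor_zero]
      · rcases reach6 (x 2) (x 5) (x 0 ^^^ x 3) hv2 with h2 | h2
        · refine ⟨_, mk_move x 4 2 (by decide) (x 0 ^^^ x 3 ^^^ x 1) (x 0 ^^^ x 3 ^^^ x 5) h1 h2 ?_, ?_⟩
          · exact hne0.imp (fun h => xhelp2 h) (fun h => xhelp1 h)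
          · simp [Cond6, Function.update_apply, Nat.xor_xor_cancel_right, Nat.xor_xor_cancel_left,
              Nat.xor_comm, Nat.xor_assoc, xor_lcomm, Nat.xor_self, Nat.xor_zero]
        · refine ⟨_, mk_move x 4 5 (by decide) (x 0 ^^^ x 3 ^^^ x 1) (x 0 ^^^ x 3 ^^^ x 2) h1 h2 ?_, ?_⟩
          · exact hne0.imp (fun h => xhelp2 h) (fun h => xhelp2 h)
          · simp [Cond6, Function.update_apply, Nat.xor_xor_cancel_right, Nat.xor_xor_cancel_left,
              Nat.xor_comm, Nat.xor_assoc, xor_lcomm, Nat.xor_self, Nat.xor_zero]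
    · -- v = c
      have hv1 : x 2 ^^^ x 5 ≤ x 0 ^^^ x 3 := hac
      have hv2 : x 2 ^^^ x 5 ≤ x 1 ^^^ x 4 := hac.trans hab
      have hne0 : x 0 ^^^ x 3 ≠ x 2 ^^^ x 5 ∨ x 1 ^^^ x 4 ≠ x 2 ^^^ x 5 := by
        by_contra hc
        push_neg at hc
        exact hx ⟨hc.1.trans hc.2.symm, hc.2⟩
      rcases reach6 (x 0) (x 3) (x 2 ^^^ x 5) hv1 with h1 | h1
      · rcases reach6 (x 1) (x 4) (x 2 ^^^ x 5) hv2 with h2 | h2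
        · refine ⟨_, mk_move x 0 1 (by decide) (x 2 ^^^ x 5 ^^^ x 3) (x 2 ^^^ x 5 ^^^ x 4) h1 h2 ?_, ?_⟩
          · exact hne0.imp (fun h => xhelp1 h) (fun h => xhelp1 h)
          · simp [Cond6, Function.update_apply, Nat.xor_xor_cancel_right, Nat.xor_xor_cancel_left,
              Nat.xor_comm, Nat.xor_assoc, xor_lcomm, Nat.xor_self, Nat.xor_zero]
        · refine ⟨_, mk_move x 0 4 (by decide) (x 2 ^^^ x 5 ^^^ x 3) (x 2 ^^^ x 5 ^^^ x 1) h1 h2 ?_, ?_⟩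
          · exact hne0.imp (fun h => xhelp1 h) (fun h => xhelp2 h)
          · simp [Cond6, Function.update_apply, Nat.xor_xor_cancel_right, Nat.xor_xor_cancel_left,
              Nat.xor_comm, Nat.xor_assoc, xor_lcomm, Nat.xor_self, Nat.xor_zero]
      · rcases reach6 (x 1) (x 4) (x 2 ^^^ x 5) hv2 with h2 | h2
        · refine ⟨_, mk_move x 3 1 (by decide) (x 2 ^^^ x 5 ^^^ x 0) (x 2 ^^^ x 5 ^^^ x 4) h1 h2 ?_, ?_⟩
          · exact hne0.imp (fun h => xhelp2 h) (fun h => xhelp1 h)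
          · simp [Cond6, Function.update_apply, Nat.xor_xor_cancel_right, Nat.xor_xor_cancel_left,
              Nat.xor_comm, Nat.xor_assoc, xor_lcomm, Nat.xor_self, Nat.xor_zero]
        · refine ⟨_, mk_move x 3 4 (by decide) (x 2 ^^^ x 5 ^^^ x 0) (x 2 ^^^ x 5 ^^^ x 1) h1 h2 ?_, ?_⟩
          · exact hne0.imp (fun h => xhelp2 h) (fun h => xhelp2 h)
          · simp [Cond6, Function.update_apply, Nat.xor_xor_cancel_right, Nat.xor_xor_cancel_left,
              Nat.xor_comm, Nat.xor_assoc, xor_lcomm, Nat.xor_self, Nat.xor_zero]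
  · rcases le_total (x 1 ^^^ x 4) (x 2 ^^^ x 5) with hbc | hbc
    · -- v = b, change pairs (0,3),(2,5)
      have hv1 : x 1 ^^^ x 4 ≤ x 0 ^^^ x 3 := hab
      have hv2 : x 1 ^^^ x 4 ≤ x 2 ^^^ x 5 := hbc
      have hne0 : x 0 ^^^ x 3 ≠ x 1 ^^^ x 4 ∨ x 2 ^^^ x 5 ≠ x 1 ^^^ x 4 := by
        by_contra hc
        push_neg at hc
        exact hx ⟨hc.1, hc.2.symm⟩
      rcases reach6 (x 0) (x 3) (x 1 ^^^ x 4) hv1 with h1 | h1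
      · rcases reach6 (x 2) (x 5) (x 1 ^^^ x 4) hv2 with h2 | h2
        · refine ⟨_, mk_move x 0 2 (by decide) (x 1 ^^^ x 4 ^^^ x 3) (x 1 ^^^ x 4 ^^^ x 5) h1 h2 ?_, ?_⟩
          · exact hne0.imp (fun h => xhelp1 h) (fun h => xhelp1 h)
          · simp [Cond6, Function.update_apply, Nat.xor_xor_cancel_right, Nat.xor_xor_cancel_left,
              Nat.xor_comm, Nat.xor_assoc, xor_lcomm, Nat.xor_self, Nat.xor_zero]
        · refine ⟨_, mk_move x 0 5 (by decide) (x 1 ^^^ x 4 ^^^ x 3) (x 1 ^^^ x 4 ^^^ x 2) h1 h2 ?_, ?_⟩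
          · exact hne0.imp (fun h => xhelp1 h) (fun h => xhelp2 h)
          · simp [Cond6, Function.update_apply, Nat.xor_xor_cancel_right, Nat.xor_xor_cancel_left,
              Nat.xor_comm, Nat.xor_assoc, xor_lcomm, Nat.xor_self, Nat.xor_zero]
      · rcases reach6 (x 2) (x 5) (x 1 ^^^ x 4) hv2 with h2 | h2
        · refine ⟨_, mk_move x 3 2 (by decide) (x 1 ^^^ x 4 ^^^ x 0) (x 1 ^^^ x 4 ^^^ x 5) h1 h2 ?_, ?_⟩
          · exact hne0.imp (fun h => xhelp2 h) (fun h => xhelp1 h)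
          · simp [Cond6, Function.update_apply, Nat.xor_xor_cancel_right, Nat.xor_xor_cancel_left,
              Nat.xor_comm, Nat.xor_assoc, xor_lcomm, Nat.xor_self, Nat.xor_zero]
        · refine ⟨_, mk_move x 3 5 (by decide) (x 1 ^^^ x 4 ^^^ x 0) (x 1 ^^^ x 4 ^^^ x 2) h1 h2 ?_, ?_⟩
          · exact hne0.imp (fun h => xhelp2 h) (fun h => xhelp2 h)
          · simp [Cond6, Function.update_apply, Nat.xor_xor_cancel_right, Nat.xor_xor_cancel_left,
              Nat.xor_comm, Nat.xor_assoc, xor_lcomm, Nat.xor_self, Nat.xor_zero]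
    · -- v = c
      have hv1 : x 2 ^^^ x 5 ≤ x 0 ^^^ x 3 := hbc.trans hab
      have hv2 : x 2 ^^^ x 5 ≤ x 1 ^^^ x 4 := hbc
      have hne0 : x 0 ^^^ x 3 ≠ x 2 ^^^ x 5 ∨ x 1 ^^^ x 4 ≠ x 2 ^^^ x 5 := by
        by_contra hc
        push_neg at hc
        exact hx ⟨hc.1.trans hc.2.symm, hc.2⟩
      rcases reach6 (x 0) (x 3) (x 2 ^^^ x 5) hv1 with h1 | h1
      · rcases reach6 (x 1) (x 4) (x 2 ^^^ x 5) hv2 with h2 | h2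
        · refine ⟨_, mk_move x 0 1 (by decide) (x 2 ^^^ x 5 ^^^ x 3) (x 2 ^^^ x 5 ^^^ x 4) h1 h2 ?_, ?_⟩
          · exact hne0.imp (fun h => xhelp1 h) (fun h => xhelp1 h)
          · simp [Cond6, Function.update_apply, Nat.xor_xor_cancel_right, Nat.xor_xor_cancel_left,
              Nat.xor_comm, Nat.xor_assoc, xor_lcomm, Nat.xor_self, Nat.xor_zero]
        · refine ⟨_, mk_move x 0 4 (by decide) (x 2 ^^^ x 5 ^^^ x 3) (x 2 ^^^ x 5 ^^^ x 1) h1 h2 ?_, ?_⟩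
          · exact hne0.imp (fun h => xhelp1 h) (fun h => xhelp2 h)
          · simp [Cond6, Function.update_apply, Nat.xor_xor_cancel_right, Nat.xor_xor_cancel_left,
              Nat.xor_comm, Nat.xor_assoc, xor_lcomm, Nat.xor_self, Nat.xor_zero]
      · rcases reach6 (x 1) (x 4) (x 2 ^^^ x 5) hv2 with h2 | h2
        · refine ⟨_, mk_move x 3 1 (by decide) (x 2 ^^^ x 5 ^^^ x 0) (x 2 ^^^ x 5 ^^^ x 4) h1 h2 ?_, ?_⟩
          · exact hne0.imp (fun h => xhelp2 h) (fun h => xhelp1 h)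
          · simp [Cond6, Function.update_apply, Nat.xor_xor_cancel_right, Nat.xor_xor_cancel_left,
              Nat.xor_comm, Nat.xor_assoc, xor_lcomm, Nat.xor_self, Nat.xor_zero]
        · refine ⟨_, mk_move x 3 4 (by decide) (x 2 ^^^ x 5 ^^^ x 0) (x 2 ^^^ x 5 ^^^ x 1) h1 h2 ?_, ?_⟩
          · exact hne0.imp (fun h => xhelp2 h) (fun h => xhelp2 h)
          · simp [Cond6, Function.update_apply, Nat.xor_xor_cancel_right, Nat.xor_xor_cancel_left,
              Nat.xor_comm, Nat.xor_assoc, xor_lcomm, Nat.xor_self, Nat.xor_zero]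

def tot6 (x : Fin 6 → ℕ) : ℕ := ∑ j, x j

lemma move_tot {x y : Fin 6 → ℕ} (h : ecnMove 6 {1, 2} 2 x y) : tot6 y < tot6 x := by
  obtain ⟨hne, hle, _⟩ := h
  obtain ⟨k, hk⟩ := Function.ne_iff.mp hne
  exact Finset.sum_lt_sum (fun j _ => hle j) ⟨k, Finset.mem_univ k, lt_of_le_of_ne (hle k) hk⟩

lemma main_ind : ∀ N : ℕ, ∀ x : Fin 6 → ℕ, tot6 x ≤ N →
    (Cond6 x → IsP (ecnMove 6 {1, 2} 2) x) ∧ (¬Cond6 x → IsN (ecnMove 6 {1, 2} 2) x) := by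
  intro N
  induction N with
  | zero =>
    intro x hx
    have hz : ∀ j, x j = 0 := by
      intro j
      have := Finset.single_le_sum (f := x) (fun i _ => Nat.zero_le _) (Finset.mem_univ j)
      simp only [tot6] at hx
      omega
    constructor
    · intro _ y hy
      exact absurd (move_tot hy) (by omega)
    · intro hc
      exact absurd ⟨by rw [hz, hz, hz, hz], by rw [hz, hz, hz, hz]⟩ hc
  | succ N ih =>
    intro x hx
    constructor
    · intro hc y hy
      exact (ih y (by have := move_tot hy; omega)).2 (lemA hc hy)
    · intro hnc
      obtain ⟨y, hy, hcy⟩ := lemB hnc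
      exact IsN.intro x y hy fun z hz =>
        (ih z (by have h1 := move_tot hy; have h2 := move_tot hz; omega)).2 (lemA hcy hz)

lemma notNP : ∀ N : ℕ, ∀ x : Fin 6 → ℕ, tot6 x ≤ N →
    IsN (ecnMove 6 {1, 2} 2) x → ¬IsP (ecnMove 6 {1, 2} 2) x := by
  intro N
  induction N with
  | zero =>
    rintro x hx ⟨_, y, hxy, hy⟩ _
    exact absurd (move_tot hxy) (by omega)
  | succ N ih =>
    rintro x hx ⟨_, y, hxy, hy⟩ hP
    exact ih y (by have := move_tot hxy; omega) (hP y hxy) hy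

theorem ecn6_12_2_P_iff (n : Fin 6 → ℕ) :
    IsP (ecnMove 6 {1, 2} 2) n ↔
      n 0 ^^^ n 3 = n 1 ^^^ n 4 ∧ n 1 ^^^ n 4 = n 2 ^^^ n 5 := by
  constructor
  · intro hP
    by_contra hnc
    exact notNP (tot6 n) n le_rfl ((main_ind (tot6 n) n le_rfl).2 hnc) hP
  · intro hc
    exact (main_ind (tot6 n) n le_rfl).1 hc
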